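/- arXiv:1801.00107 — 2 statements merged into one kernel-verified Lean document; each statement's English description precedes it below -/
import Mathlib

section
/- Let A and B be positive bounded operators on a complex Hilbert space H with A ≤ B. Then A is an extreme point of the operator interval [0,B] (as a convex subset of the real vector space of bounded operators on H) if and only if A and B − A are singular. -/
open scoped ComplexOrder
set_option maxHeartbeats 1000000
set_option synthInstance.maxHeartbeats 200000

/-- `A` is a positive operator: `⟪A x, x⟫ ≥ 0` for all `x`. -/
def IsPosOp {H : Type*} [NormedAddCommGroup H] [InnerProductSpace ℂ H]
    (A : H →L[ℂ] H) : Prop :=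
  ∀ x : H, 0 ≤ (inner ℂ (A x) x : ℂ)

/-- The Loewner order: `A ≤ B` iff `B - A` is positive. -/
def OpLe {H : Type*} [NormedAddCommGroup H] [InnerProductSpace ℂ H]
    (A B : H →L[ℂ] H) : Prop :=
  IsPosOp (B - A)

/-- The quadratic form of an operator: `A[x] = re ⟪A x, x⟫`. -/
noncomputable def QF {H : Type*} [NormedAddCommGroup H] [InnerProductSpace ℂ H]
    (A : H →L[ℂ] H) (x : H) : ℝ :=
  (inner ℂ (A x) x : ℂ).re

/-- `A` and `B` are singular: the only positive operator below both is `0`. -/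
def SingOp {H : Type*} [NormedAddCommGroup H] [InnerProductSpace ℂ H]
    (A B : H →L[ℂ] H) : Prop :=
  ∀ C : H →L[ℂ] H, IsPosOp C → OpLe C A → OpLe C B → C = 0

/-- `B` is `A`-absolutely continuous: `B` is the strong limit of a monotone increasing
sequence of positive operators, each dominated by a nonnegative multiple of `A`. -/
def AbsCont {H : Type*} [NormedAddCommGroup H] [InnerProductSpace ℂ H]
    (B A : H →L[ℂ] H) : Prop :=
  ∃ Bn : ℕ → H →L[ℂ] H,
    (∀ n, IsPosOp (Bn n)) ∧
    (∀ m n, m ≤ n → OpLe (Bn m) (Bn n)) ∧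
    (∀ n, ∃ c : ℝ, 0 ≤ c ∧ OpLe (Bn n) (c • A)) ∧
    (∀ x : H, Filter.Tendsto (fun n => Bn n x) Filter.atTop (nhds (B x)))

/-- `S = [A]B`: the quadratic form of `S` is `sup_n inf_y (B[x-y] + n·A[y])`. -/
def IsShort {H : Type*} [NormedAddCommGroup H] [InnerProductSpace ℂ H]
    (A B S : H →L[ℂ] H) : Prop :=
  ∀ x : H, QF S x = ⨆ n : ℕ, ⨅ y : H, (QF B (x - y) + (n : ℝ) * QF A y)

section Aux

variable {H : Type*} [NormedAddCommGroup H] [InnerProductSpace ℂ H]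

lemma isPosOp_add {S T : H →L[ℂ] H} (hS : IsPosOp S) (hT : IsPosOp T) :
    IsPosOp (S + T) := by
  intro x
  simp only [ContinuousLinearMap.add_apply, inner_add_left]
  exact add_nonneg (hS x) (hT x)

lemma isPosOp_smul {T : H →L[ℂ] H} (hT : IsPosOp T) {t : ℝ} (ht : 0 ≤ t) :
    IsPosOp (t • T) := by
  intro x
  rw [ContinuousLinearMap.smul_apply, RCLike.real_smul_eq_coe_smul (K := ℂ),
    inner_smul_left, RCLike.conj_ofReal]
  exact mul_nonneg (RCLike.ofReal_nonneg.mpr ht) (hT x)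

lemma qf_nonneg {T : H →L[ℂ] H} (hT : IsPosOp T) (x : H) : 0 ≤ QF T x :=
  (Complex.nonneg_iff.mp (hT x)).1

lemma inner_eq_qf {T : H →L[ℂ] H} (hT : IsPosOp T) (x : H) :
    (inner ℂ (T x) x : ℂ) = ((QF T x : ℝ) : ℂ) := by
  obtain ⟨_, him⟩ := Complex.nonneg_iff.mp (hT x)
  exact Complex.ext (by simp [QF]) (by simp [← him])

lemma qf_add (S T : H →L[ℂ] H) (x : H) : QF (S + T) x = QF S x + QF T x := by
  simp [QF, ContinuousLinearMap.add_apply, inner_add_left]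

lemma qf_sub (S T : H →L[ℂ] H) (x : H) : QF (S - T) x = QF S x - QF T x := by
  simp [QF, ContinuousLinearMap.sub_apply, inner_sub_left]

variable [CompleteSpace H]

lemma isPosOp_iff_isPositive (T : H →L[ℂ] H) : IsPosOp T ↔ T.IsPositive := by
  rw [ContinuousLinearMap.isPositive_iff_complex]
  constructor
  · intro h x
    obtain ⟨hre, him⟩ := Complex.nonneg_iff.mp (h x)
    refine ⟨?_, by simpa using hre⟩
    apply Complex.ext <;> simp [← him]
  · intro h x
    obtain ⟨heq, hre⟩ := h x
    rw [Complex.nonneg_iff]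
    refine ⟨by simpa using hre, ?_⟩
    have := congrArg Complex.im heq
    simpa using this

lemma isPosOp_selfAdjoint {T : H →L[ℂ] H} (hT : IsPosOp T) : IsSelfAdjoint T :=
  ((isPosOp_iff_isPositive T).mp hT).isSelfAdjoint

lemma isPosOp_norm_sq {T : H →L[ℂ] H} (hT : IsPosOp T) (x : H) :
    ‖T x‖ ^ 2 ≤ ‖T‖ * QF T x := by
  have hsa := isPosOp_selfAdjoint hT
  have hsymm := (ContinuousLinearMap.isSelfAdjoint_iff_isSymmetric.mp hsa)
  have h1 : (inner ℂ (T (T x)) x : ℂ) = ((‖T x‖ ^ 2 : ℝ) : ℂ) := by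
    have := hsymm (T x) x
    simp only [ContinuousLinearMap.coe_coe] at this
    rw [this]
    exact_mod_cast inner_self_eq_norm_sq_to_K (𝕜 := ℂ) (T x)
  have h1b : (inner ℂ (T x) (T x) : ℂ) = ((‖T x‖ ^ 2 : ℝ) : ℂ) := by
    exact_mod_cast inner_self_eq_norm_sq_to_K (𝕜 := ℂ) (T x)
  have key : ∀ t : ℝ, 0 ≤ QF T (T x) * (t * t) + (-(2 * ‖T x‖ ^ 2)) * t + QF T x := by
    intro t
    have h0 := hT (x - (t:ℂ) • T x)
    have hc : (inner ℂ (T (x - (t:ℂ) • T x)) (x - (t:ℂ) • T x) : ℂ)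
        = inner ℂ (T x) x - ((2 * t * ‖T x‖ ^ 2 : ℝ) : ℂ)
          + ((t * t : ℝ) : ℂ) * inner ℂ (T (T x)) (T x) := by
      simp only [map_sub, map_smul, inner_sub_left, inner_sub_right, inner_smul_left,
        inner_smul_right, Complex.conj_ofReal, h1, h1b]
      push_cast
      ring
    have h2 : 0 ≤ ((inner ℂ (T (x - (t:ℂ) • T x)) (x - (t:ℂ) • T x) : ℂ)).re :=
      (Complex.nonneg_iff.mp h0).1
    rw [hc] at h2
    simp only [Complex.add_re, Complex.sub_re, Complex.ofReal_re, Complex.re_ofReal_mul] at h2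
    unfold QF
    nlinarith [h2]
  have hd := discrim_le_zero key
  unfold discrim at hd
  have hb : QF T (T x) ≤ ‖T‖ * ‖T x‖ ^ 2 := by
    unfold QF
    calc (inner ℂ (T (T x)) (T x) : ℂ).re ≤ ‖(inner ℂ (T (T x)) (T x) : ℂ)‖ := Complex.re_le_norm _
      _ ≤ ‖T (T x)‖ * ‖T x‖ := norm_inner_le_norm _ _
      _ ≤ (‖T‖ * ‖T x‖) * ‖T x‖ := by gcongr; exact T.le_opNorm _
      _ = ‖T‖ * ‖T x‖ ^ 2 := by ring
  have hQA : 0 ≤ QF T x := qf_nonneg hT x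
  rcases eq_or_lt_of_le (norm_nonneg (T x)) with h | h
  · simp only [← h]
    simpa using mul_nonneg (norm_nonneg T) hQA
  · nlinarith [hd, mul_le_mul_of_nonneg_right hb hQA, mul_pos h h]

lemma sing_aux {A C D : H →L[ℂ] H}
    (hA : IsPosOp A) (hC : IsPosOp C)
    (h1 : IsPosOp (A + D)) (h2 : IsPosOp (A - D))
    (h3 : IsPosOp (C + D)) (h4 : IsPosOp (C - D))
    (hs : SingOp A C) : D = 0 := by
  have hsaD : IsSelfAdjoint D := by
    have := (isPosOp_selfAdjoint h1).sub (isPosOp_selfAdjoint hA)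
    simpa using this
  have bound : ∀ P : H →L[ℂ] H, IsPosOp P → IsPosOp (P + D) → IsPosOp (P - D) →
      ∀ x, ‖D x‖ ^ 2 ≤ 2 * (‖P‖ + ‖D‖) * QF P x := by
    intro P hP hp1 hp2 x
    have hq1 : QF (P + D) x ≤ 2 * QF P x := by
      have := qf_nonneg hp2 x
      rw [qf_sub] at this
      rw [qf_add]
      linarith
    have hq2 : QF (P - D) x ≤ 2 * QF P x := by
      have := qf_nonneg hp1 x
      rw [qf_add] at this
      rw [qf_sub]
      linarith
    have e1 : ‖(P + D) x‖ ^ 2 ≤ (‖P‖ + ‖D‖) * (2 * QF P x) := by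
      calc ‖(P + D) x‖ ^ 2 ≤ ‖P + D‖ * QF (P + D) x := isPosOp_norm_sq hp1 x
        _ ≤ (‖P‖ + ‖D‖) * (2 * QF P x) := by
            apply mul_le_mul (norm_add_le P D) hq1 (qf_nonneg hp1 x)
            positivity
    have e2 : ‖(P - D) x‖ ^ 2 ≤ (‖P‖ + ‖D‖) * (2 * QF P x) := by
      calc ‖(P - D) x‖ ^ 2 ≤ ‖P - D‖ * QF (P - D) x := isPosOp_norm_sq hp2 x
        _ ≤ (‖P‖ + ‖D‖) * (2 * QF P x) := by
            apply mul_le_mul (norm_sub_le P D) hq2 (qf_nonneg hp2 x)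
            positivity
    have hsum : 2 * ‖D x‖ ≤ ‖(P + D) x‖ + ‖(P - D) x‖ := by
      have hid : (P + D) x - (P - D) x = D x + D x := by
        simp only [ContinuousLinearMap.add_apply, ContinuousLinearMap.sub_apply]
        abel
      calc 2 * ‖D x‖ = ‖(2:ℝ)‖ * ‖D x‖ := by norm_num
        _ = ‖(2:ℝ) • D x‖ := (norm_smul _ _).symm
        _ = ‖(P + D) x - (P - D) x‖ := by rw [hid, two_smul]
        _ ≤ ‖(P + D) x‖ + ‖(P - D) x‖ := norm_sub_le _ _
    nlinarith [sq_nonneg (‖(P + D) x‖ - ‖(P - D) x‖), norm_nonneg ((P + D) x),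
      norm_nonneg ((P - D) x), norm_nonneg (D x)]
  set M : ℝ := 2 * (‖A‖ + ‖D‖) + 2 * (‖C‖ + ‖D‖) + 1 with hM
  have hM0 : (0:ℝ) < M := by positivity
  have hDD : ∀ x : H, (inner ℂ ((D ∘L D) x) x : ℂ) = ((‖D x‖ ^ 2 : ℝ) : ℂ) := by
    intro x
    have hsymm := ContinuousLinearMap.isSelfAdjoint_iff_isSymmetric.mp hsaD
    have := hsymm (D x) x
    simp only [ContinuousLinearMap.coe_coe] at this
    simp only [ContinuousLinearMap.comp_apply]
    rw [this]
    exact_mod_cast inner_self_eq_norm_sq_to_K (𝕜 := ℂ) (D x)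
  set E : H →L[ℂ] H := M⁻¹ • (D ∘L D) with hE
  have hQE : ∀ x : H, (inner ℂ (E x) x : ℂ) = ((M⁻¹ * ‖D x‖ ^ 2 : ℝ) : ℂ) := by
    intro x
    rw [hE, ContinuousLinearMap.smul_apply, RCLike.real_smul_eq_coe_smul (K := ℂ),
      inner_smul_left, RCLike.conj_ofReal, hDD x]
    exact (Complex.ofReal_mul _ _).symm
  have hEpos : IsPosOp E := by
    intro x
    rw [hQE x, Complex.nonneg_iff]
    refine ⟨?_, (Complex.ofReal_im _).symm⟩
    simp only [Complex.ofReal_re]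
    positivity
  have hle : ∀ P : H →L[ℂ] H, IsPosOp P → (∀ x, ‖D x‖ ^ 2 ≤ M * QF P x) → OpLe E P := by
    intro P hP hb x
    show (0:ℂ) ≤ inner ℂ ((P - E) x) x
    rw [ContinuousLinearMap.sub_apply, inner_sub_left, hQE x, inner_eq_qf hP x,
      ← Complex.ofReal_sub, Complex.nonneg_iff]
    refine ⟨?_, (Complex.ofReal_im _).symm⟩
    simp only [Complex.ofReal_re]
    have := hb x
    rw [sub_nonneg, inv_mul_le_iff₀ hM0]
    exact this
  have hEA : OpLe E A := by
    apply hle A hA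
    intro x
    have h := bound A hA h1 h2 x
    have := qf_nonneg hA x
    nlinarith [norm_nonneg C, norm_nonneg D]
  have hEC : OpLe E C := by
    apply hle C hC
    intro x
    have h := bound C hC h3 h4 x
    have := qf_nonneg hC x
    nlinarith [norm_nonneg A, norm_nonneg D]
  have hE0 : E = 0 := hs E hEpos hEA hEC
  have hDD0 : (D ∘L D) = 0 := by
    have : M⁻¹ • (D ∘L D) = 0 := hE0
    have h2 := congrArg (fun T : H →L[ℂ] H => M • T) this
    simpa [smul_smul, mul_inv_cancel₀ hM0.ne'] using h2
  ext x
  have : (inner ℂ (((D ∘L D)) x) x : ℂ) = 0 := by rw [hDD0]; simp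
  rw [hDD x] at this
  have hn : ‖D x‖ ^ 2 = 0 := by exact_mod_cast this
  simpa using pow_eq_zero_iff (n := 2) (by norm_num) |>.mp hn

end Aux

theorem extreme_point_iff_singular
    {H : Type*} [NormedAddCommGroup H] [InnerProductSpace ℂ H] [CompleteSpace H]
    (A B : H →L[ℂ] H) (hA : IsPosOp A) (hB : IsPosOp B) (hAB : OpLe A B) :
    A ∈ Set.extremePoints ℝ {C : H →L[ℂ] H | IsPosOp C ∧ OpLe C B} ↔
      SingOp A (B - A) := by
  constructor
  · rintro ⟨hmem, hext⟩ Cp hCp hCpA hCpB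
    have hX : (A - Cp) ∈ {C : H →L[ℂ] H | IsPosOp C ∧ OpLe C B} := by
      refine ⟨hCpA, ?_⟩
      show IsPosOp (B - (A - Cp))
      have he : B - (A - Cp) = (B - A) + Cp := by abel
      rw [he]
      exact isPosOp_add hAB hCp
    have hY : (A + Cp) ∈ {C : H →L[ℂ] H | IsPosOp C ∧ OpLe C B} := by
      refine ⟨isPosOp_add hA hCp, ?_⟩
      show IsPosOp (B - (A + Cp))
      have he : B - (A + Cp) = (B - A) - Cp := by abel
      rw [he]
      exact hCpB
    have hseg : A ∈ openSegment ℝ (A - Cp) (A + Cp) := by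
      refine ⟨1/2, 1/2, by norm_num, by norm_num, by norm_num, ?_⟩
      module
    have h0 := hext hX hY hseg
    have : Cp = A - (A - Cp) := by abel
    rw [this, h0]
    abel
  · intro hs
    refine ⟨⟨hA, hAB⟩, ?_⟩
    rintro X ⟨hX, hXB⟩ Y ⟨hY, hYB⟩ ⟨a, b, ha, hb, hab, hsum⟩
    set C : H →L[ℂ] H := B - A with hCdef
    set D : H →L[ℂ] H := X - A with hDdef
    have hbne : b ≠ 0 := ne_of_gt hb
    have hrpos : 0 < a / b := div_pos ha hb
    have hrne : a / b ≠ 0 := ne_of_gt hrpos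
    have f1 : IsPosOp (A + D) := by
      have he : A + D = X := by rw [hDdef]; abel
      rw [he]; exact hX
    have f2 : IsPosOp (C - D) := by
      have he : C - D = B - X := by rw [hDdef, hCdef]; abel
      rw [he]; exact hXB
    have hBY : b • Y = A - a • X := by
      rw [eq_sub_iff_add_eq, add_comm]
      exact hsum
    have key1 : b • Y = b • (A - (a / b) • D) := by
      rw [hBY, hDdef, smul_sub, smul_smul]
      have hba : b * (a / b) = a := by field_simp
      rw [hba]
      match_scalars <;> field_simp <;> linarith
    have hYeq : Y = A - (a / b) • D := by
      calc Y = b⁻¹ • (b • Y) := (inv_smul_smul₀ hbne Y).symm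
        _ = b⁻¹ • (b • (A - (a / b) • D)) := by rw [key1]
        _ = A - (a / b) • D := inv_smul_smul₀ hbne _
    have f3 : IsPosOp (A - (a / b) • D) := by rw [← hYeq]; exact hY
    have f4 : IsPosOp (C + (a / b) • D) := by
      have he : C + (a / b) • D = B - Y := by rw [hYeq, hCdef]; abel
      rw [he]; exact hYB
    set t : ℝ := min 1 (a / b) with ht
    have ht0 : 0 < t := lt_min one_pos hrpos
    have ht1 : t ≤ 1 := min_le_left _ _
    have htr : t ≤ a / b := min_le_right _ _
    have htr1 : t / (a / b) ≤ 1 := (div_le_one hrpos).mpr htr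
    have htr0 : 0 ≤ t / (a / b) := le_of_lt (div_pos ht0 hrpos)
    have g1 : IsPosOp (A + t • D) := by
      have he : A + t • D = (1 - t) • A + t • (A + D) := by module
      rw [he]
      exact isPosOp_add (isPosOp_smul hA (by linarith)) (isPosOp_smul f1 ht0.le)
    have g2 : IsPosOp (A - t • D) := by
      have he : A - t • D = (1 - t / (a / b)) • A + (t / (a / b)) • (A - (a / b) • D) := by
        match_scalars <;> field_simp <;> ring
      rw [he]
      exact isPosOp_add (isPosOp_smul hA (by linarith)) (isPosOp_smul f3 htr0)
    have g3 : IsPosOp (C + t • D) := by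
      have he : C + t • D = (1 - t / (a / b)) • C + (t / (a / b)) • (C + (a / b) • D) := by
        match_scalars <;> field_simp <;> ring
      rw [he]
      exact isPosOp_add (isPosOp_smul hAB (by linarith)) (isPosOp_smul f4 htr0)
    have g4 : IsPosOp (C - t • D) := by
      have he : C - t • D = (1 - t) • C + t • (C - D) := by module
      rw [he]
      exact isPosOp_add (isPosOp_smul hAB (by linarith)) (isPosOp_smul f2 ht0.le)
    have hD0 : t • D = 0 := sing_aux hA hAB g1 g2 g3 g4 hs
    have hDzero : D = 0 := by
      calc D = t⁻¹ • (t • D) := (inv_smul_smul₀ ht0.ne' D).symm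
        _ = 0 := by rw [hD0, smul_zero]
    have hXA : X = A := by
      have : X - A = 0 := hDzero
      exact sub_eq_zero.mp this
    have hYA : Y = A := by
      rw [hYeq, hDzero, smul_zero, sub_zero]
    exact hXA
end

section
/- Let A and B be positive bounded operators on a complex Hilbert space H with A ≤ B. Then A is an extreme point of the operator interval [0,B] (as a convex subset of the real vector space of bounded operators on H) if and only if there exist a complex Hilbert space K, an injective continuous linear map J : K → H with J ∘ J* = B, and a continuous linear map P : K → K with P* = P and P ∘ P = P (an orthogonal projection), such that A = J ∘ P ∘ J*. -/
open scoped ComplexOrder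
open ContinuousLinearMap

set_option maxHeartbeats 1000000
set_option synthInstance.maxHeartbeats 1000000


open scoped ComplexOrder

universe u

section Aux

variable {H : Type*} [NormedAddCommGroup H] [InnerProductSpace ℂ H] [CompleteSpace H]

lemma isPosOp_iff_nonneg (A : H →L[ℂ] H) : IsPosOp A ↔ 0 ≤ A := by
  rw [ContinuousLinearMap.nonneg_iff_isPositive, ContinuousLinearMap.isPositive_iff_complex]
  unfold IsPosOp
  constructor
  · intro h x
    have h' := h x
    rw [Complex.le_def] at h'
    simp only [Complex.zero_re, Complex.zero_im] at h'
    refine ⟨?_, h'.1⟩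
    apply Complex.ext <;> simp [h'.2]
  · intro h x
    obtain ⟨h1, h2⟩ := h x
    rw [Complex.le_def]
    refine ⟨by simpa using h2, ?_⟩
    simpa using congrArg Complex.im h1

lemma re_inner_eq_norm_sqrt_sq (C : H →L[ℂ] H) (hC : 0 ≤ C) (x : H) :
    (inner ℂ (C x) x : ℂ).re = ‖CFC.sqrt C x‖ ^ 2 := by
  have hs : CFC.sqrt C * CFC.sqrt C = C := CFC.sqrt_mul_sqrt_self C hC
  have hsa : ContinuousLinearMap.adjoint (CFC.sqrt C) = CFC.sqrt C := by
    rw [← ContinuousLinearMap.star_eq_adjoint]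
    exact IsSelfAdjoint.of_nonneg (CFC.sqrt_nonneg _)
  have h1 : C x = CFC.sqrt C (CFC.sqrt C x) := by
    conv_lhs => rw [← hs]
    rfl
  rw [h1]
  nth_rewrite 1 [← hsa]
  rw [ContinuousLinearMap.adjoint_inner_left]
  rw [← inner_self_eq_norm_sq (𝕜 := ℂ)]
  rfl

lemma apply_eq_zero_of_re_inner_eq_zero {C : H →L[ℂ] H} (hC : 0 ≤ C) {x : H}
    (h : (inner ℂ (C x) x : ℂ).re = 0) : C x = 0 := by
  have hs : CFC.sqrt C * CFC.sqrt C = C := CFC.sqrt_mul_sqrt_self C hC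
  have h2 : CFC.sqrt C x = 0 := by
    have := re_inner_eq_norm_sqrt_sq C hC x
    rw [h] at this
    have : ‖CFC.sqrt C x‖ = 0 := by nlinarith [norm_nonneg (CFC.sqrt C x)]
    simpa using this
  have h3 : C x = CFC.sqrt C (CFC.sqrt C x) := by
    conv_lhs => rw [← hs]
    rw [ContinuousLinearMap.mul_apply]
  rw [h3, h2, map_zero]

lemma re_inner_nonneg_of_nonneg {C : H →L[ℂ] H} (hC : 0 ≤ C) (x : H) :
    0 ≤ (inner ℂ (C x) x : ℂ).re := by
  rw [re_inner_eq_norm_sqrt_sq C hC x]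
  positivity

end Aux

section Two

variable {K : Type*} [NormedAddCommGroup K] [InnerProductSpace ℂ K] [CompleteSpace K]
variable {H : Type*} [NormedAddCommGroup H] [InnerProductSpace ℂ H] [CompleteSpace H]

lemma denseRange_adjoint_of_injective (J : K →L[ℂ] H) (hJ : Function.Injective J) :
    DenseRange (ContinuousLinearMap.adjoint J) := by
  have h1 : (LinearMap.range (ContinuousLinearMap.adjoint J : H →ₗ[ℂ] K)).topologicalClosure = ⊤ := by
    rw [Submodule.topologicalClosure_eq_top_iff, Submodule.eq_bot_iff]
    intro x hx
    rw [Submodule.mem_orthogonal] at hx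
    have hx' : J x = 0 := by
      rw [← inner_self_eq_zero (𝕜 := ℂ) (x := J x)]
      have := hx (ContinuousLinearMap.adjoint J (J x)) (LinearMap.mem_range_self _ _)
      rwa [ContinuousLinearMap.adjoint_inner_left] at this
    exact hJ (by simpa using hx')
  have h2 : Dense ((LinearMap.range (ContinuousLinearMap.adjoint J : H →ₗ[ℂ] K) : Submodule ℂ K) : Set K) :=
    Submodule.dense_iff_topologicalClosure_eq_top.mpr h1
  simpa [DenseRange, LinearMap.coe_range] using h2

lemma conj_injective' (J : K →L[ℂ] H) (hJ : Function.Injective J) {X Y : K →L[ℂ] K}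
    (h : J.comp (X.comp (ContinuousLinearMap.adjoint J)) =
      J.comp (Y.comp (ContinuousLinearMap.adjoint J))) : X = Y := by
  have hd := denseRange_adjoint_of_injective J hJ
  have heq : ∀ z : H, X (ContinuousLinearMap.adjoint J z) = Y (ContinuousLinearMap.adjoint J z) :=
    fun z => hJ (by simpa using congrFun (congrArg DFunLike.coe h) z)
  have : (X : K → K) = Y := by
    refine Continuous.ext_on hd X.continuous Y.continuous ?_
    rintro _ ⟨z, rfl⟩
    exact heq z
  ext z
  exact congrFun this z

/-- Douglas-type factorization. -/
lemma exists_conj_of_le (J : K →L[ℂ] H) (hJ : Function.Injective J)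
    (C : H →L[ℂ] H) (hC : 0 ≤ C)
    (hCB : C ≤ J.comp (ContinuousLinearMap.adjoint J)) :
    ∃ X : K →L[ℂ] K, 0 ≤ X ∧ X ≤ 1 ∧
      C = J.comp (X.comp (ContinuousLinearMap.adjoint J)) := by
  classical
  set J' := ContinuousLinearMap.adjoint J with hJ'
  set S := CFC.sqrt C with hSdef
  have hS0 : (0 : H →L[ℂ] H) ≤ S := CFC.sqrt_nonneg _
  have hSS : S * S = C := CFC.sqrt_mul_sqrt_self C hC
  have hSsa : ContinuousLinearMap.adjoint S = S := by
    rw [← ContinuousLinearMap.star_eq_adjoint]; exact IsSelfAdjoint.of_nonneg hS0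
  -- the key norm bound
  have bound : ∀ x : H, ‖S x‖ ≤ ‖J' x‖ := by
    intro x
    have h1 : ‖S x‖ ^ 2 = (inner ℂ (C x) x : ℂ).re := (re_inner_eq_norm_sqrt_sq C hC x).symm
    have h2 : (inner ℂ (C x) x : ℂ).re ≤ (inner ℂ ((J.comp J') x) x : ℂ).re := by
      have hpos := (ContinuousLinearMap.le_def _ _).mp hCB
      have h' := hpos.2 x
      rw [ContinuousLinearMap.reApplyInnerSelf_apply] at h'
      have h'' : (0 : ℝ) ≤ (inner ℂ ((J.comp J' - C) x) x : ℂ).re := h'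
      simp only [ContinuousLinearMap.sub_apply, inner_sub_left, Complex.sub_re] at h''
      linarith
    have e1 : (inner ℂ ((J.comp J') x) x : ℂ) = inner ℂ (J' x) (J' x) :=
      (ContinuousLinearMap.adjoint_inner_right J (J' x) x).symm
    have h3 : (inner ℂ ((J.comp J') x) x : ℂ).re = ‖J' x‖ ^ 2 := by
      rw [e1, ← inner_self_eq_norm_sq (𝕜 := ℂ)]
      rfl
    have h4 : ‖S x‖ ^ 2 ≤ ‖J' x‖ ^ 2 := by rw [h1, ← h3]; exact h2
    nlinarith [norm_nonneg (S x), norm_nonneg (J' x)]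
  have h_wd : ∀ x y : H, J' x = J' y → S x = S y := by
    intro x y hxy
    have hb := bound (x - y)
    rw [map_sub, map_sub, hxy, sub_self, norm_zero] at hb
    have : ‖S x - S y‖ = 0 := le_antisymm hb (norm_nonneg _)
    rw [norm_eq_zero, sub_eq_zero] at this
    exact this
  set D : Submodule ℂ K := LinearMap.range (J' : H →ₗ[ℂ] K) with hD
  have hpre : ∀ d : D, ∃ x : H, J' x = ↑d := fun d => d.2
  let pre : D → H := fun d => (hpre d).choose
  have hpre' : ∀ d : D, J' (pre d) = ↑d := fun d => (hpre d).choose_spec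
  let f : D → H := fun d => S (pre d)
  have key : ∀ (d : D) (x : H), J' x = ↑d → f d = S x := fun d x hx =>
    h_wd _ _ (by rw [hpre' d, hx])
  let T₀ : D →ₗ[ℂ] H :=
    { toFun := f
      map_add' := fun d e => by
        show f (d + e) = f d + f e
        rw [key (d + e) (pre d + pre e) (by simp [hpre']), map_add]
      map_smul' := fun c d => by
        show f (c • d) = c • f d
        rw [key (c • d) (c • pre d) (by simp [hpre']), map_smul] }
  have hbound : ∀ d : D, ‖T₀ d‖ ≤ 1 * ‖d‖ := by
    intro d
    rw [one_mul]
    calc ‖S (pre d)‖ ≤ ‖J' (pre d)‖ := bound _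
    _ = ‖(d : K)‖ := by rw [hpre']
  let T₁ : D →L[ℂ] H := T₀.mkContinuous 1 hbound
  have hdense : DenseRange (D.subtypeL) := by
    have := denseRange_adjoint_of_injective J hJ
    simp [DenseRange, Submodule.coe_subtypeL, Subtype.range_coe, hD,
      LinearMap.coe_range]
    exact this
  have hiso : Isometry (D.subtypeL) := isometry_subtype_coe
  let T : K →L[ℂ] H := T₁.extend D.subtypeL
  have hText : ∀ d : D, T ↑d = T₁ d := fun d =>
    ContinuousLinearMap.extend_eq T₁ hdense hiso.isUniformInducing d
  have hTS : ∀ x : H, T (J' x) = S x := by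
    intro x
    have hm : J' x ∈ D := LinearMap.mem_range_self _ x
    have := hText ⟨J' x, hm⟩
    rw [this, show T₁ ⟨J' x, hm⟩ = f ⟨J' x, hm⟩ from rfl, key ⟨J' x, hm⟩ x rfl]
  have hTnorm : ‖T‖ ≤ 1 := by
    have h1 : ‖T‖ ≤ 1 * ‖T₁‖ :=
      ContinuousLinearMap.opNorm_extend_le T₁ hdense
        (N := 1) (fun x => by simp [hiso.norm_map_of_map_zero (map_zero _)])
    have h2 : ‖T₁‖ ≤ 1 := T₀.mkContinuous_norm_le zero_le_one hbound
    linarith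
  have hScomp : S = T.comp J' := by
    ext x
    exact (hTS x).symm
  have hXsa : ContinuousLinearMap.adjoint ((ContinuousLinearMap.adjoint T).comp T) =
      (ContinuousLinearMap.adjoint T).comp T := by
    rw [ContinuousLinearMap.adjoint_comp, ContinuousLinearMap.adjoint_adjoint]
  refine ⟨(ContinuousLinearMap.adjoint T).comp T, ?_, ?_, ?_⟩
  · rw [ContinuousLinearMap.nonneg_iff_isPositive]
    have := (ContinuousLinearMap.isPositive_one (E := H)).adjoint_conj T
    simpa [ContinuousLinearMap.one_def] using this
  · rw [ContinuousLinearMap.le_def]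
    constructor
    · exact ContinuousLinearMap.isSelfAdjoint_iff_isSymmetric.mp <| ContinuousLinearMap.isSelfAdjoint_iff'.mpr (by
        rw [map_sub, hXsa, ← ContinuousLinearMap.star_eq_adjoint, star_one])
    · intro u
      rw [ContinuousLinearMap.reApplyInnerSelf_apply]
      have h1 : (inner ℂ ((1 - (ContinuousLinearMap.adjoint T).comp T) u) u : ℂ).re
          = ‖u‖ ^ 2 - ‖T u‖ ^ 2 := by
        simp only [ContinuousLinearMap.sub_apply, ContinuousLinearMap.one_apply,
          ContinuousLinearMap.comp_apply, inner_sub_left, Complex.sub_re]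
        rw [ContinuousLinearMap.adjoint_inner_left]
        rw [← inner_self_eq_norm_sq (𝕜 := ℂ) (x := u), ← inner_self_eq_norm_sq (𝕜 := ℂ) (x := T u)]
        rfl
      show (0 : ℝ) ≤ (inner ℂ ((1 - (ContinuousLinearMap.adjoint T).comp T) u) u : ℂ).re
      rw [h1]
      have h2 : ‖T u‖ ≤ ‖u‖ := by
        calc ‖T u‖ ≤ ‖T‖ * ‖u‖ := T.le_opNorm u
        _ ≤ 1 * ‖u‖ := by have := norm_nonneg u; nlinarith
        _ = ‖u‖ := one_mul _
      nlinarith [norm_nonneg (T u), norm_nonneg u]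
  · have hC' : C = (ContinuousLinearMap.adjoint S).comp S := by
      rw [hSsa, ← hSS]; rfl
    rw [hC', hScomp, ContinuousLinearMap.adjoint_comp, ContinuousLinearMap.adjoint_adjoint]
    rw [ContinuousLinearMap.comp_assoc, ContinuousLinearMap.comp_assoc]

end Two


section Three

variable {K : Type*} [NormedAddCommGroup K] [InnerProductSpace ℂ K] [CompleteSpace K]
variable {H : Type*} [NormedAddCommGroup H] [InnerProductSpace ℂ H] [CompleteSpace H]

lemma sub_mul_self_nonneg' {X : K →L[ℂ] K} (h0 : 0 ≤ X) (h1 : X ≤ 1) :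
    0 ≤ X - X * X := by
  set s := CFC.sqrt X with hsdef
  have hs : s * s = X := CFC.sqrt_mul_sqrt_self X h0
  have hssa : star s = s := (IsSelfAdjoint.of_nonneg (CFC.sqrt_nonneg _)).star_eq
  have h2 : s * X * s = X * X := by rw [← hs]; noncomm_ring
  have hkey : X - X * X = star s * (1 - X) * s := by
    rw [hssa, mul_sub, mul_one, sub_mul, hs, h2]
  rw [hkey]
  exact star_left_conjugate_nonneg (sub_nonneg.mpr h1) s

lemma add_defect_le_one {X : K →L[ℂ] K} (h0 : 0 ≤ X) (h1 : X ≤ 1) :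
    X + (X - X * X) ≤ 1 := by
  rw [← sub_nonneg]
  have hsa : star (1 - X) = 1 - X :=
    ((IsSelfAdjoint.one _).sub (IsSelfAdjoint.of_nonneg h0)).star_eq
  have hk : (1 : K →L[ℂ] K) - (X + (X - X * X)) = star (1 - X) * (1 - X) := by
    rw [hsa]; noncomm_ring
  rw [hk]
  exact star_mul_self_nonneg _

lemma proj_eq_of_combo {P X₁ X₂ : K →L[ℂ] K} (hPP : P * P = P)
    (h10 : 0 ≤ X₁) (h11 : X₁ ≤ 1) (h20 : 0 ≤ X₂) (h21 : X₂ ≤ 1)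
    {a b : ℝ} (ha : 0 < a) (hb : 0 < b) (hab : a + b = 1)
    (hsum : a • X₁ + b • X₂ = P) : X₁ = P ∧ X₂ = P := by
  have hker : ∀ (Y₁ Y₂ Q : K →L[ℂ] K), 0 ≤ Y₁ → 0 ≤ Y₂ →
      a • Y₁ + b • Y₂ = Q → ∀ x, Q x = 0 → Y₁ x = 0 ∧ Y₂ x = 0 := by
    intro Y₁ Y₂ Q hY₁ hY₂ hQ x hx
    have happ : a • (Y₁ x) + b • (Y₂ x) = Q x := by
      rw [← hQ]; simp
    have h1 : a * (inner ℂ (Y₁ x) x : ℂ).re + b * (inner ℂ (Y₂ x) x : ℂ).re = 0 := by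
      have h0 : (inner ℂ (Q x) x : ℂ).re = 0 := by rw [hx]; simp
      rw [← happ] at h0
      rw [← algebraMap_smul ℂ a (Y₁ x), ← algebraMap_smul ℂ b (Y₂ x),
        Complex.coe_algebraMap, inner_add_left, inner_smul_left, inner_smul_left] at h0
      simpa [Complex.add_re, Complex.mul_re, Complex.conj_ofReal] using h0
    have r1 := re_inner_nonneg_of_nonneg hY₁ x
    have r2 := re_inner_nonneg_of_nonneg hY₂ x
    have e1 : (inner ℂ (Y₁ x) x : ℂ).re = 0 := by nlinarith
    have e2 : (inner ℂ (Y₂ x) x : ℂ).re = 0 := by nlinarith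
    exact ⟨apply_eq_zero_of_re_inner_eq_zero hY₁ e1,
      apply_eq_zero_of_re_inner_eq_zero hY₂ e2⟩
  have h1P := hker X₁ X₂ P h10 h20 hsum
  have hone : a • (1 : K →L[ℂ] K) + b • 1 = 1 := by
    rw [← add_smul, hab, one_smul]
  have hsum' : a • (1 - X₁) + b • (1 - X₂) = 1 - P := by
    rw [smul_sub, smul_sub, sub_add_sub_comm, hone, hsum]
  have h2P := hker (1 - X₁) (1 - X₂) (1 - P) (sub_nonneg.mpr h11) (sub_nonneg.mpr h21) hsum'
  have hPx : ∀ x, P (P x) = P x := by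
    intro x
    have := congrFun (congrArg DFunLike.coe hPP) x
    simpa [ContinuousLinearMap.mul_apply] using this
  have main : ∀ Y : K →L[ℂ] K, (∀ x, P x = 0 → Y x = 0) →
      (∀ x, (1 - P) x = 0 → (1 - Y) x = 0) → Y = P := by
    intro Y hY1 hY2
    ext x
    have hx1 : P (x - P x) = 0 := by
      rw [map_sub, hPx, sub_self]
    have hx2 : (1 - P) (P x) = 0 := by
      simp [ContinuousLinearMap.sub_apply, hPx]
    have e1 : Y (x - P x) = 0 := hY1 _ hx1
    have e2' : Y (P x) = P x := by
      have e2 := hY2 _ hx2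
      simp only [ContinuousLinearMap.sub_apply, ContinuousLinearMap.one_apply] at e2
      rwa [sub_eq_zero, eq_comm] at e2
    calc Y x = Y (P x + (x - P x)) := by rw [add_sub_cancel]
    _ = Y (P x) + Y (x - P x) := map_add _ _ _
    _ = P x := by rw [e1, e2', add_zero]
  exact ⟨main X₁ (fun x hx => (h1P x hx).1) (fun x hx => (h2P x hx).1),
    main X₂ (fun x hx => (h1P x hx).2) (fun x hx => (h2P x hx).2)⟩

lemma conj_mem_interval (J : K →L[ℂ] H) {B : H →L[ℂ] H}
    (hJJ : J.comp (ContinuousLinearMap.adjoint J) = B) {Y : K →L[ℂ] K}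
    (h0 : 0 ≤ Y) (h1 : Y ≤ 1) :
    0 ≤ J.comp (Y.comp (ContinuousLinearMap.adjoint J)) ∧
      J.comp (Y.comp (ContinuousLinearMap.adjoint J)) ≤ B := by
  have pos : ∀ Z : K →L[ℂ] K, 0 ≤ Z → 0 ≤ J.comp (Z.comp (ContinuousLinearMap.adjoint J)) := by
    intro Z hZ
    rw [ContinuousLinearMap.nonneg_iff_isPositive]
    have := ((ContinuousLinearMap.nonneg_iff_isPositive Z).mp hZ).conj_adjoint J
    exact this
  refine ⟨pos Y h0, ?_⟩
  rw [← sub_nonneg]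
  have hsub : B - J.comp (Y.comp (ContinuousLinearMap.adjoint J)) =
      J.comp (((1 : K →L[ℂ] K) - Y).comp (ContinuousLinearMap.adjoint J)) := by
    rw [ContinuousLinearMap.sub_comp, ContinuousLinearMap.one_def,
      ContinuousLinearMap.id_comp, ContinuousLinearMap.comp_sub, hJJ]
  rw [hsub]
  exact pos _ (sub_nonneg.mpr h1)

lemma conj_add' (J : K →L[ℂ] H) (X Y : K →L[ℂ] K) :
    J.comp ((X + Y).comp (ContinuousLinearMap.adjoint J)) =
      J.comp (X.comp (ContinuousLinearMap.adjoint J)) +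
        J.comp (Y.comp (ContinuousLinearMap.adjoint J)) := by
  rw [ContinuousLinearMap.add_comp, ContinuousLinearMap.comp_add]

lemma conj_smul' (J : K →L[ℂ] H) (a : ℝ) (X : K →L[ℂ] K) :
    J.comp ((a • X).comp (ContinuousLinearMap.adjoint J)) =
      a • J.comp (X.comp (ContinuousLinearMap.adjoint J)) := by
  ext x
  simp

end Three

theorem extreme_point_iff_projection_factorization
    {H : Type u} [NormedAddCommGroup H] [InnerProductSpace ℂ H] [CompleteSpace H]
    (A B : H →L[ℂ] H) (hA : IsPosOp A) (hB : IsPosOp B) (hAB : OpLe A B) :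
    A ∈ Set.extremePoints ℝ {C : H →L[ℂ] H | IsPosOp C ∧ OpLe C B} ↔
      ∃ (K : Type u) (_ : NormedAddCommGroup K) (_ : InnerProductSpace ℂ K)
        (_ : CompleteSpace K) (J : K →L[ℂ] H) (P : K →L[ℂ] K),
        Function.Injective J ∧
        J.comp (ContinuousLinearMap.adjoint J) = B ∧
        ContinuousLinearMap.adjoint P = P ∧ P.comp P = P ∧
        A = J.comp (P.comp (ContinuousLinearMap.adjoint J)) := by
  have hposiff : ∀ C : H →L[ℂ] H, IsPosOp C ↔ 0 ≤ C := fun C => isPosOp_iff_nonneg C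
  have hA' : 0 ≤ A := (hposiff A).mp hA
  have hB' : 0 ≤ B := (hposiff B).mp hB
  have hAB' : A ≤ B := sub_nonneg.mp ((hposiff _).mp hAB)
  have hset : {C : H →L[ℂ] H | IsPosOp C ∧ OpLe C B} = {C : H →L[ℂ] H | 0 ≤ C ∧ C ≤ B} := by
    ext C
    simp only [Set.mem_setOf_eq, OpLe]
    rw [hposiff, hposiff, sub_nonneg]
  rw [hset]
  constructor
  · -- forward direction
    intro hext
    obtain ⟨hAs, hext2⟩ := hext
    set R := CFC.sqrt B with hRdef
    have hR0 : (0 : H →L[ℂ] H) ≤ R := CFC.sqrt_nonneg _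
    have hRR : R * R = B := CFC.sqrt_mul_sqrt_self B hB'
    have hRsa : ContinuousLinearMap.adjoint R = R := by
      rw [← ContinuousLinearMap.star_eq_adjoint]
      exact (IsSelfAdjoint.of_nonneg hR0).star_eq
    set Ksub : Submodule ℂ H := (LinearMap.range (R : H →ₗ[ℂ] H)).topologicalClosure with hKdef
    haveI : CompleteSpace Ksub := (Submodule.isClosed_topologicalClosure _).completeSpace_coe
    set J : Ksub →L[ℂ] H := R.comp Ksub.subtypeL with hJdef
    have hJadj : ContinuousLinearMap.adjoint J = Ksub.orthogonalProjectionOnto.comp R := by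
      rw [hJdef, ContinuousLinearMap.adjoint_comp, Submodule.adjoint_subtypeL, hRsa]
    have hmem : ∀ x : H, R x ∈ Ksub := fun x =>
      Submodule.le_topologicalClosure _ (LinearMap.mem_range_self _ x)
    have hJJ : J.comp (ContinuousLinearMap.adjoint J) = B := by
      ext x
      calc J (ContinuousLinearMap.adjoint J x)
          = R ↑(Ksub.orthogonalProjectionOnto (R x)) := by rw [hJadj]; rfl
      _ = R (R x) := by rw [← Submodule.starProjection_apply, Submodule.starProjection_eq_self_iff.mpr (hmem x)]
      _ = B x := by rw [← ContinuousLinearMap.mul_apply, hRR]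
    have hJinj : Function.Injective J := by
      intro k1 k2 hk
      rw [← sub_eq_zero]
      have hk0 : J (k1 - k2) = 0 := by rw [map_sub, hk, sub_self]
      set k : Ksub := k1 - k2 with hkdef
      have hRk : R (k : H) = 0 := hk0
      have horth : (k : H) ∈ (LinearMap.range (R : H →ₗ[ℂ] H))ᗮ := by
        rw [Submodule.mem_orthogonal]
        rintro u ⟨y, rfl⟩
        show (inner ℂ (R y) (k : H) : ℂ) = 0
        rw [← hRsa, ContinuousLinearMap.adjoint_inner_left, hRk, inner_zero_right]
      have hcl : (k : H) ∈ ((LinearMap.range (R : H →ₗ[ℂ] H))ᗮ)ᗮ := by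
        rw [Submodule.orthogonal_orthogonal_eq_closure]
        exact k.2
      have hzero : (k : H) = 0 := by
        have h0 := (Submodule.mem_orthogonal _ _).mp hcl (k : H) horth
        rwa [inner_self_eq_zero] at h0
      exact ZeroMemClass.coe_eq_zero.mp hzero
    obtain ⟨X, hX0, hX1, hAX⟩ := exists_conj_of_le J hJinj A hA' (by rw [hJJ]; exact hAB')
    set Dif : Ksub →L[ℂ] Ksub := X - X * X with hDif
    have hD0 : 0 ≤ Dif := sub_mul_self_nonneg' hX0 hX1
    have hplus0 : 0 ≤ X + Dif := add_nonneg hX0 hD0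
    have hplus1 : X + Dif ≤ 1 := add_defect_le_one hX0 hX1
    have hXsa : star X = X := (IsSelfAdjoint.of_nonneg hX0).star_eq
    have hminus0 : 0 ≤ X - Dif := by
      have hXX : X - Dif = X * X := by rw [hDif, sub_sub_cancel]
      rw [hXX]
      have := star_mul_self_nonneg X
      rwa [hXsa] at this
    have hminus1 : X - Dif ≤ 1 := le_trans (sub_le_self _ hD0) hX1
    obtain ⟨hp0, hp1⟩ := conj_mem_interval J hJJ hplus0 hplus1
    obtain ⟨hm0, hm1⟩ := conj_mem_interval J hJJ hminus0 hminus1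
    have hmid : (1/2 : ℝ) • (J.comp ((X + Dif).comp (ContinuousLinearMap.adjoint J))) +
        (1/2 : ℝ) • (J.comp ((X - Dif).comp (ContinuousLinearMap.adjoint J))) = A := by
      rw [← conj_smul', ← conj_smul', ← conj_add', hAX]
      congr 1
      have h2 : (X + Dif) + (X - Dif) = X + X := by abel
      rw [← smul_add, h2, ← two_smul ℝ X, smul_smul]
      norm_num
    have hextr := hext2 ⟨hp0, hp1⟩ ⟨hm0, hm1⟩
      ⟨1/2, 1/2, by norm_num, by norm_num, by norm_num, hmid⟩
    have hzero : X + Dif = X := conj_injective' J hJinj (hextr.trans hAX)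
    have hidem : X * X = X := by
      have hD : Dif = 0 := by
        have := hzero
        rwa [add_eq_left] at this
      rw [hDif] at hD
      have := sub_eq_zero.mp hD
      exact this.symm
    refine ⟨Ksub, inferInstance, inferInstance, inferInstance, J, X, hJinj, hJJ, ?_, hidem, hAX⟩
    rw [← ContinuousLinearMap.star_eq_adjoint]
    exact hXsa
  · -- backward direction
    rintro ⟨K, _, _, _, J, P, hJinj, hJJ, hPadj, hPP, hAP⟩
    have hPP' : P * P = P := hPP
    have hPsa : star P = P := by rw [ContinuousLinearMap.star_eq_adjoint]; exact hPadj
    have hP0 : 0 ≤ P := by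
      have := star_mul_self_nonneg P
      rwa [hPsa, hPP'] at this
    have hP1 : P ≤ 1 := by
      rw [← sub_nonneg]
      have h1 : star ((1 : K →L[ℂ] K) - P) = 1 - P := by
        rw [star_sub, star_one, hPsa]
      have hmm := star_mul_self_nonneg ((1 : K →L[ℂ] K) - P)
      rw [h1] at hmm
      have h2 : ((1 : K →L[ℂ] K) - P) * (1 - P) = 1 - P := by
        rw [sub_mul, one_mul, mul_sub, mul_one, hPP']
        abel
      rwa [h2] at hmm
    refine ⟨⟨hA', hAB'⟩, ?_⟩
    intro C₁ hC₁ C₂ hC₂ hseg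
    obtain ⟨a, b, ha, hb, hab, hsum⟩ := hseg
    obtain ⟨X₁, h10, h11, hC1⟩ := exists_conj_of_le J hJinj C₁ hC₁.1 (by rw [hJJ]; exact hC₁.2)
    obtain ⟨X₂, h20, h21, hC2⟩ := exists_conj_of_le J hJinj C₂ hC₂.1 (by rw [hJJ]; exact hC₂.2)
    have hsum' : J.comp ((a • X₁ + b • X₂).comp (ContinuousLinearMap.adjoint J)) =
        J.comp (P.comp (ContinuousLinearMap.adjoint J)) := by
      rw [conj_add', conj_smul', conj_smul', ← hC1, ← hC2, hsum]
      exact hAP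
    have hcomb : a • X₁ + b • X₂ = P := conj_injective' J hJinj hsum'
    obtain ⟨hX1P, hX2P⟩ := proj_eq_of_combo hPP' h10 h11 h20 h21 ha hb hab hcomb
    rw [hC1, hX1P, ← hAP]
end
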